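/- Let N ≥ 1, 1 ≤ S ≤ N, o ∈ ℝ^N, and let O := Σ_{k=1}^N o_k Z_k, where Z_k is the N-qubit Pauli operator acting as Z on qubit k and as identity on all other qubits. Let Q be a nonempty finite collection of subsets of {1,…,N}, each of size S. For a subset s ⊆ {1,…,N} and a function h: s → {1,2}, let σ_h^s denote the N-qubit Pauli operator acting as σ_{h(q)} on each qubit q ∈ s and as identity elsewhere. Let ρ₁,…,ρ_m ∈ M_{2^N}(ℂ) be Hermitian with trace one. Define K_∞ ∈ ℝ^{m×m} by [K_∞]_{aa'} := (1/(2^S·|Q|))·Σ_{s ∈ Q} Σ_{h: s→{1,2}} (1/4)·Tr[i[O, σ_h^s]ρ_a]·Tr[i[O, σ_h^s]ρ_{a'}]. Let A_Q be the real matrix with rows indexed by pairs (s, p) with s ∈ Q and p: s → {1,2}, and with entries [A_Q]_{(s,p),a} := Tr[σ_p^s ρ_a]. Then, in the semidefinite (Loewner) order on real symmetric m×m matrices, ((Σ_{k=1}^N |o_k|)²/(2^S·|Q|))·A_QᵀA_Q ≽ K_∞ ≽ (Δ_S/(2^S·|Q|))·A_QᵀA_Q, where Δ_S := min{(gᵀo)²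 : g ∈ {0,−1,1}^N, 1 ≤ ‖g‖₁ ≤ S}. -/

import Mathlib

open Matrix

/-- sign attached to a bit: `-1` for `0`, `1` for `1`. -/
noncomputable def epsSign : Fin 2 → ℝ := ![-1, 1]

/-- flip the bit of `h` at coordinate `k`. -/
def flipAt {ι : Type*} [DecidableEq ι] (k : ι) (h : ι → Fin 2) : ι → Fin 2 :=
  Function.update h k (h k + 1)

variable {ι : Type*} [Fintype ι] [DecidableEq ι]

/-- character-like vectors `u g h = ∏ ((ε(g k))·i)^{h k}`. -/
noncomputable def uvec (g h : ι → Fin 2) : ℂ :=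
  ∏ k, ((epsSign (g k) : ℂ) * Complex.I) ^ ((h k : ℕ))

lemma single_orth (a b : Fin 2) :
    ∑ x : Fin 2, (starRingEnd ℂ) (((epsSign x : ℂ) * Complex.I) ^ (a : ℕ)) *
      (((epsSign x : ℂ) * Complex.I) ^ (b : ℕ)) = if a = b then 2 else 0 := by
  fin_cases a <;> fin_cases b <;>
    simp [epsSign, Fin.sum_univ_two, Complex.ext_iff] <;> norm_num

lemma uvec_orth (h h' : ι → Fin 2) :
    ∑ g : ι → Fin 2, (starRingEnd ℂ) (uvec g h) * uvec g h' =
      if h = h' then (2 : ℂ) ^ (Fintype.card ι) else 0 := by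
  have key : ∀ g : ι → Fin 2, (starRingEnd ℂ) (uvec g h) * uvec g h' =
      ∏ k, ((starRingEnd ℂ) (((epsSign (g k) : ℂ) * Complex.I) ^ ((h k : ℕ))) *
        (((epsSign (g k) : ℂ) * Complex.I) ^ ((h' k : ℕ)))) := by
    intro g
    simp [uvec, map_prod, _root_.map_mul, Finset.prod_mul_distrib]
  simp only [key]
  rw [← Fintype.prod_sum fun k x => (starRingEnd ℂ) (((epsSign x : ℂ) * Complex.I) ^ ((h k : ℕ))) *
        (((epsSign x : ℂ) * Complex.I) ^ ((h' k : ℕ)))]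
  simp only [single_orth]
  by_cases hh : h = h'
  · subst hh; simp [Finset.prod_ite_eq]
  · obtain ⟨k, hk⟩ := Function.ne_iff.mp hh
    rw [if_neg hh]
    exact Finset.prod_eq_zero (Finset.mem_univ k) (by simp [hk])

/-- Fourier coefficient. -/
noncomputable def fc (v : (ι → Fin 2) → ℂ) (g : ι → Fin 2) : ℂ :=
  ∑ h, (starRingEnd ℂ) (uvec g h) * v h

lemma parseval (v : (ι → Fin 2) → ℂ) :
    ∑ g : ι → Fin 2, (starRingEnd ℂ) (fc v g) * fc v g =
      (2 : ℂ) ^ (Fintype.card ι) * ∑ h, (starRingEnd ℂ) (v h) * v h := by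
  have : ∀ g : ι → Fin 2, (starRingEnd ℂ) (fc v g) * fc v g =
      ∑ h, ∑ h', ((starRingEnd ℂ) (v h) * v h') *
        ((starRingEnd ℂ) (uvec g h') * uvec g h) := by
    intro g
    rw [fc, map_sum, Finset.sum_mul_sum]
    refine Finset.sum_congr rfl fun h _ => Finset.sum_congr rfl fun h' _ => ?_
    simp only [_root_.map_mul, RingHomCompTriple.comp_apply, RingHom.id_apply, starRingEnd_self_apply]
    ring
  simp only [this]
  rw [Finset.sum_comm]
  have swap2 : ∀ h, ∑ g : ι → Fin 2, ∑ h', ((starRingEnd ℂ) (v h) * v h') *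
        ((starRingEnd ℂ) (uvec g h') * uvec g h)
      = ∑ h', ((starRingEnd ℂ) (v h) * v h') *
          ∑ g : ι → Fin 2, (starRingEnd ℂ) (uvec g h') * uvec g h := by
    intro h; rw [Finset.sum_comm]
    exact Finset.sum_congr rfl fun h' _ => by rw [Finset.mul_sum]
  simp only [swap2, uvec_orth, mul_ite, mul_zero]
  rw [Finset.mul_sum]
  refine Finset.sum_congr rfl fun h _ => ?_
  rw [Finset.sum_ite_eq' Finset.univ h fun x => (starRingEnd ℂ) (v h) * v x * 2 ^ Fintype.card ι]
  simp only [Finset.mem_univ, if_true]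
  ring

lemma flipAt_involutive (k : ι) : Function.Involutive (flipAt k) := by
  intro h
  funext j
  by_cases hj : j = k
  · subst hj
    simp [flipAt, Function.update_self]
    omega
  · simp [flipAt, Function.update_of_ne hj]

lemma flipAt_apply_self (k : ι) (h : ι → Fin 2) : flipAt k h k = h k + 1 := by
  simp [flipAt]

lemma flipAt_apply_ne (k j : ι) (h : ι → Fin 2) (hj : j ≠ k) : flipAt k h j = h j := by
  simp [flipAt, Function.update_of_ne hj]

lemma eps_conj_flip (g h : ι → Fin 2) (k : ι) :
    (epsSign (flipAt k h k) : ℂ) * (starRingEnd ℂ) (uvec g (flipAt k h)) =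
      (-(epsSign (g k) : ℂ) * Complex.I) * (starRingEnd ℂ) (uvec g h) := by
  have hsplit : ∀ h' : ι → Fin 2, uvec g h' =
      ((epsSign (g k) : ℂ) * Complex.I) ^ ((h' k : ℕ)) *
        ∏ j ∈ Finset.univ.erase k, ((epsSign (g j) : ℂ) * Complex.I) ^ ((h' j : ℕ)) := by
    intro h'
    rw [uvec, ← Finset.mul_prod_erase Finset.univ _ (Finset.mem_univ k)]
  have herase : ∀ j ∈ Finset.univ.erase k,
      ((epsSign (g j) : ℂ) * Complex.I) ^ (((flipAt k h) j : ℕ)) =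
        ((epsSign (g j) : ℂ) * Complex.I) ^ ((h j : ℕ)) := by
    intro j hj
    rw [flipAt_apply_ne k j h (Finset.mem_erase.mp hj).1]
  have key : (epsSign (h k + 1) : ℂ) *
        (starRingEnd ℂ) (((epsSign (g k) : ℂ) * Complex.I) ^ (((h k + 1 : Fin 2)) : ℕ)) =
      (-(epsSign (g k) : ℂ) * Complex.I) *
        (starRingEnd ℂ) (((epsSign (g k) : ℂ) * Complex.I) ^ ((h k : ℕ))) := by
    have hgk : g k = 0 ∨ g k = 1 := by omega
    have hhk : h k = 0 ∨ h k = 1 := by omega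
    rcases hgk with hgk | hgk <;> rcases hhk with hhk | hhk <;>
      simp [hgk, hhk, epsSign, Complex.ext_iff] <;> norm_num
  rw [hsplit (flipAt k h), hsplit h, Finset.prod_congr rfl herase, flipAt_apply_self,
    _root_.map_mul, _root_.map_mul]
  linear_combination ((starRingEnd ℂ)
    (∏ j ∈ Finset.univ.erase k, ((epsSign (g j) : ℂ) * Complex.I) ^ ((h j : ℕ)))) * key

/-- The hopping operator: `t h = ∑ k ε(h k)·o k·v(flip_k h)`. -/
noncomputable def hopOp (o : ι → ℝ) (v : (ι → Fin 2) → ℂ) (h : ι → Fin 2) : ℂ :=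
  ∑ k, (epsSign (h k) : ℂ) * (o k : ℂ) * v (flipAt k h)

lemma fc_hopOp (o : ι → ℝ) (v : (ι → Fin 2) → ℂ) (g : ι → Fin 2) :
    fc (hopOp o v) g = (-Complex.I * ∑ k, (epsSign (g k) : ℂ) * (o k : ℂ)) * fc v g := by
  have step1 : fc (hopOp o v) g =
      ∑ k, (o k : ℂ) * ∑ h, (epsSign (h k) : ℂ) * (starRingEnd ℂ) (uvec g h) * v (flipAt k h) := by
    simp only [fc, hopOp, Finset.mul_sum]
    rw [Finset.sum_comm]
    exact Finset.sum_congr rfl fun k _ => Finset.sum_congr rfl fun h _ => by ring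
  have step2 : ∀ k, ∑ h, (epsSign (h k) : ℂ) * (starRingEnd ℂ) (uvec g h) * v (flipAt k h)
      = (-(epsSign (g k) : ℂ) * Complex.I) * fc v g := by
    intro k
    rw [← Function.Bijective.sum_comp (flipAt_involutive (ι := ι) k).bijective
      (fun h => (epsSign (h k) : ℂ) * (starRingEnd ℂ) (uvec g h) * v (flipAt k h))]
    have : ∀ h : ι → Fin 2,
        (epsSign ((flipAt k h) k) : ℂ) * (starRingEnd ℂ) (uvec g (flipAt k h)) *
          v (flipAt k (flipAt k h))
        = (-(epsSign (g k) : ℂ) * Complex.I) * ((starRingEnd ℂ) (uvec g h) * v h) := by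
      intro h
      rw [flipAt_involutive k h, eps_conj_flip g h k]
      ring
    rw [Finset.sum_congr rfl fun h _ => this h, ← Finset.mul_sum, fc]
  rw [step1]
  simp only [step2]
  rw [Finset.mul_sum, Finset.sum_mul]
  exact Finset.sum_congr rfl fun k _ => by ring

/-- Real version of Parseval for real-valued `v`. -/
lemma parseval_real (v : (ι → Fin 2) → ℝ) :
    ∑ g : ι → Fin 2, Complex.normSq (fc (fun h => (v h : ℂ)) g) =
      (2 : ℝ) ^ (Fintype.card ι) * ∑ h, (v h) ^ 2 := by
  have := parseval (ι := ι) (fun h => (v h : ℂ))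
  have h2 : ∀ g : ι → Fin 2, (starRingEnd ℂ) (fc (fun h => (v h : ℂ)) g) *
      fc (fun h => (v h : ℂ)) g = (Complex.normSq (fc (fun h => (v h : ℂ)) g) : ℂ) := by
    intro g; rw [mul_comm, Complex.mul_conj]
  rw [Finset.sum_congr rfl fun g _ => h2 g] at this
  have h3 : ∀ h : ι → Fin 2, (starRingEnd ℂ) ((v h : ℂ)) * (v h : ℂ) = ((v h ^ 2 : ℝ) : ℂ) := by
    intro h; rw [Complex.conj_ofReal]; push_cast; ring
  rw [Finset.sum_congr rfl fun h _ => h3 h] at this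
  exact_mod_cast this

/-- The core spectral bounds. -/
lemma core_bounds (o : ι → ℝ) (v : (ι → Fin 2) → ℝ) (Δ B : ℝ)
    (hΔ : ∀ g : ι → Fin 2, Δ ≤ (∑ k, epsSign (g k) * o k) ^ 2)
    (hB : ∀ g : ι → Fin 2, (∑ k, epsSign (g k) * o k) ^ 2 ≤ B) :
    Δ * ∑ h, (v h) ^ 2 ≤
        (∑ h, (∑ k, epsSign (h k) * o k * v (flipAt k h)) ^ 2) ∧
      (∑ h, (∑ k, epsSign (h k) * o k * v (flipAt k h)) ^ 2) ≤ B * ∑ h, (v h) ^ 2 := by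
  set vc : (ι → Fin 2) → ℂ := fun h => (v h : ℂ) with hvc
  have hhop : ∀ h : ι → Fin 2, hopOp o vc h = ((∑ k, epsSign (h k) * o k * v (flipAt k h) : ℝ) : ℂ) := by
    intro h; rw [hopOp]; push_cast; rfl
  -- Parseval applied to the (real-valued) hop
  have hP1 : ∑ g : ι → Fin 2, Complex.normSq (fc (hopOp o vc) g) =
      (2 : ℝ) ^ (Fintype.card ι) * ∑ h, (∑ k, epsSign (h k) * o k * v (flipAt k h)) ^ 2 := by
    have := parseval_real (ι := ι) (fun h => ∑ k, epsSign (h k) * o k * v (flipAt k h))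
    rw [← this]
    exact Finset.sum_congr rfl fun g _ => by
      congr 1; rw [fc, fc]; exact Finset.sum_congr rfl fun h _ => by rw [hhop h]
  have hP2 : ∑ g : ι → Fin 2, Complex.normSq (fc vc g) =
      (2 : ℝ) ^ (Fintype.card ι) * ∑ h, (v h) ^ 2 := parseval_real v
  -- eigen relation pointwise on normSq
  have heig : ∀ g : ι → Fin 2, Complex.normSq (fc (hopOp o vc) g) =
      (∑ k, epsSign (g k) * o k) ^ 2 * Complex.normSq (fc vc g) := by
    intro g
    rw [fc_hopOp o vc g]
    have hc : (-Complex.I * ∑ k, (epsSign (g k) : ℂ) * (o k : ℂ)) =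
        -Complex.I * ((∑ k, epsSign (g k) * o k : ℝ) : ℂ) := by push_cast; ring
    rw [hc, Complex.normSq_mul, Complex.normSq_mul, Complex.normSq_ofReal]
    simp only [Complex.normSq_neg, Complex.normSq_I]
    ring
  have hpow : (0 : ℝ) < (2 : ℝ) ^ (Fintype.card ι) := by positivity
  constructor
  · refine le_of_mul_le_mul_left ?_ hpow
    calc (2:ℝ) ^ (Fintype.card ι) * (Δ * ∑ h, (v h) ^ 2)
        = Δ * ((2:ℝ) ^ (Fintype.card ι) * ∑ h, (v h) ^ 2) := by ring
      _ = Δ * ∑ g : ι → Fin 2, Complex.normSq (fc vc g) := by rw [hP2]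
      _ ≤ ∑ g : ι → Fin 2, Complex.normSq (fc (hopOp o vc) g) := by
          rw [Finset.mul_sum]
          refine Finset.sum_le_sum fun g _ => ?_
          rw [heig g]
          exact mul_le_mul_of_nonneg_right (hΔ g) (Complex.normSq_nonneg _)
      _ = (2:ℝ) ^ (Fintype.card ι) * ∑ h, (∑ k, epsSign (h k) * o k * v (flipAt k h)) ^ 2 := hP1
  · refine le_of_mul_le_mul_left ?_ hpow
    calc (2:ℝ) ^ (Fintype.card ι) * ∑ h, (∑ k, epsSign (h k) * o k * v (flipAt k h)) ^ 2
        = ∑ g : ι → Fin 2, Complex.normSq (fc (hopOp o vc) g) := hP1.symm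
      _ ≤ ∑ g : ι → Fin 2, B * Complex.normSq (fc vc g) := by
          refine Finset.sum_le_sum fun g _ => ?_
          rw [heig g]
          exact mul_le_mul_of_nonneg_right (hB g) (Complex.normSq_nonneg _)
      _ = B * ((2:ℝ) ^ (Fintype.card ι) * ∑ h, (v h) ^ 2) := by rw [← Finset.mul_sum, hP2]
      _ = (2:ℝ) ^ (Fintype.card ι) * (B * ∑ h, (v h) ^ 2) := by ring

----------------------------------------------------------------
-- Pauli algebra
----------------------------------------------------------------

noncomputable def pauli : Fin 4 → Matrix (Fin 2) (Fin 2) ℂ :=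
  ![1, !![0, 1; 1, 0], !![0, -Complex.I; Complex.I, 0], !![1, 0; 0, -1]]

noncomputable def pauliString (N : ℕ) (i : Fin N → Fin 4) :
    Matrix (Fin N → Fin 2) (Fin N → Fin 2) ℂ :=
  Matrix.of fun v w => ∏ n : Fin N, pauli (i n) (v n) (w n)

lemma pauliString_mul (N : ℕ) (i j : Fin N → Fin 4) :
    pauliString N i * pauliString N j =
      Matrix.of fun v w => ∏ n : Fin N, (pauli (i n) * pauli (j n)) (v n) (w n) := by
  ext v w
  simp only [Matrix.mul_apply, pauliString, Matrix.of_apply]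
  rw [Fintype.prod_sum fun n x => pauli (i n) (v n) x * pauli (j n) x (w n)]
  exact Finset.sum_congr rfl fun u _ => (Finset.prod_mul_distrib).symm

noncomputable def subsetPauliXY (N : ℕ) (s : Finset (Fin N)) (h : {q // q ∈ s} → Fin 2) :
    Matrix (Fin N → Fin 2) (Fin N → Fin 2) ℂ :=
  pauliString N (fun q => if hq : q ∈ s then ((h ⟨q, hq⟩).succ : Fin 3).castSucc else 0)

noncomputable def zObservable (N : ℕ) (o : Fin N → ℝ) :
    Matrix (Fin N → Fin 2) (Fin N → Fin 2) ℂ :=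
  ∑ k : Fin N, (o k : ℂ) • pauliString N (fun q => if q = k then 3 else 0)

/-- the `{X,Y}` letter of a bit. -/
def xyLetter (x : Fin 2) : Fin 4 := ((x.succ : Fin 3)).castSucc

def zIdx {N : ℕ} (k : Fin N) : Fin N → Fin 4 := fun q => if q = k then 3 else 0

def xyIdx {N : ℕ} (s : Finset (Fin N)) (h : {q // q ∈ s} → Fin 2) : Fin N → Fin 4 :=
  fun q => if hq : q ∈ s then xyLetter (h ⟨q, hq⟩) else 0

lemma subsetPauliXY_eq (N : ℕ) (s : Finset (Fin N)) (h : {q // q ∈ s} → Fin 2) :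
    subsetPauliXY N s h = pauliString N (xyIdx s h) := rfl

lemma xyLetter_zero : xyLetter 0 = 1 := rfl
lemma xyLetter_one : xyLetter 1 = 2 := rfl

/-- single-site commutator: `i[Z, σ_x] = 2 ε(x) σ_{x+1}`. -/
lemma pauli_z_comm (x : Fin 2) :
    Complex.I • (pauli 3 * pauli (xyLetter x) - pauli (xyLetter x) * pauli 3)
      = ((2 * epsSign x : ℝ) : ℂ) • pauli (xyLetter (x + 1)) := by
  have p1 : pauli (xyLetter 0) = !![0, 1; 1, 0] := rfl
  have p2 : pauli (xyLetter 1) = !![0, -Complex.I; Complex.I, 0] := rfl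
  have p3 : pauli 3 = !![1, 0; 0, -1] := rfl
  have hx : x = 0 ∨ x = 1 := by omega
  rcases hx with rfl | rfl
  · have h01 : ((0 : Fin 2) + 1) = 1 := rfl
    rw [h01, p1, p2, p3]
    ext a b
    fin_cases a <;> fin_cases b <;>
      simp [epsSign, Matrix.mul_apply, Fin.sum_univ_two, Complex.ext_iff] <;> norm_num
  · have h01 : ((1 : Fin 2) + 1) = 0 := rfl
    rw [h01, p1, p2, p3]
    ext a b
    fin_cases a <;> fin_cases b <;>
      simp [epsSign, Matrix.mul_apply, Fin.sum_univ_two, Complex.ext_iff] <;> norm_num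

lemma prod_sub_single {N : ℕ} (A B : Fin N → ℂ) (k : Fin N)
    (hAB : ∀ n, n ≠ k → A n = B n) :
    (∏ n, A n) - (∏ n, B n) = (A k - B k) * ∏ n ∈ Finset.univ.erase k, A n := by
  rw [← Finset.mul_prod_erase Finset.univ A (Finset.mem_univ k),
    ← Finset.mul_prod_erase Finset.univ B (Finset.mem_univ k),
    Finset.prod_congr rfl (fun n hn => (hAB n (Finset.mem_erase.mp hn).1).symm)]
  ring

/-- If `k ∉ s` then `Z_k` commutes with `σ_h^s`. -/
lemma zstr_comm_of_not_mem {N : ℕ} {s : Finset (Fin N)} (h : {q // q ∈ s} → Fin 2)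
    {k : Fin N} (hk : k ∉ s) :
    pauliString N (zIdx k) * subsetPauliXY N s h
      = subsetPauliXY N s h * pauliString N (zIdx k) := by
  rw [subsetPauliXY_eq, pauliString_mul, pauliString_mul]
  ext v w
  simp only [Matrix.of_apply]
  refine Finset.prod_congr rfl fun n _ => ?_
  have p0 : pauli 0 = 1 := rfl
  by_cases hn : n = k
  · subst hn
    have hxy0 : xyIdx s h n = 0 := by simp [xyIdx, hk]
    rw [hxy0, p0, mul_one, one_mul]
  · have hz0 : zIdx k n = 0 := by simp [zIdx, hn]
    rw [hz0, p0, mul_one, one_mul]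

/-- If `k ∈ s`, the commutator flips the letter at `k`. -/
lemma zstr_comm_of_mem {N : ℕ} {s : Finset (Fin N)} (h : {q // q ∈ s} → Fin 2)
    {k : Fin N} (hk : k ∈ s) :
    Complex.I • (pauliString N (zIdx k) * subsetPauliXY N s h
        - subsetPauliXY N s h * pauliString N (zIdx k))
      = ((2 * epsSign (h ⟨k, hk⟩) : ℝ) : ℂ) • subsetPauliXY N s (flipAt ⟨k, hk⟩ h) := by
  rw [subsetPauliXY_eq, subsetPauliXY_eq, pauliString_mul, pauliString_mul]
  ext v w
  simp only [Matrix.smul_apply, Matrix.sub_apply, Matrix.of_apply, pauliString, smul_eq_mul]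
  set A : Fin N → ℂ := fun n => (pauli (zIdx k n) * pauli (xyIdx s h n)) (v n) (w n) with hA
  set B : Fin N → ℂ := fun n => (pauli (xyIdx s h n) * pauli (zIdx k n)) (v n) (w n) with hB
  have p0 : pauli 0 = 1 := rfl
  have hAB : ∀ n, n ≠ k → A n = B n := by
    intro n hn
    have hz : zIdx k n = 0 := by simp [zIdx, hn]
    simp only [hA, hB, hz, p0, mul_one, one_mul]
  rw [prod_sub_single A B k hAB]
  have hAk : A k = (pauli 3 * pauli (xyLetter (h ⟨k, hk⟩))) (v k) (w k) := by
    simp [hA, zIdx, xyIdx, hk]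
  have hBk : B k = (pauli (xyLetter (h ⟨k, hk⟩)) * pauli 3) (v k) (w k) := by
    simp [hB, zIdx, xyIdx, hk]
  -- entrywise consequence of pauli_z_comm
  have hcomm := congrFun (congrFun (congrArg (fun M => (M : Matrix (Fin 2) (Fin 2) ℂ))
    (pauli_z_comm (h ⟨k, hk⟩))) (v k)) (w k)
  simp only [Matrix.smul_apply, Matrix.sub_apply, smul_eq_mul] at hcomm
  -- rewrite the flipped string product
  have hflipk : xyIdx s (flipAt ⟨k, hk⟩ h) k = xyLetter (h ⟨k, hk⟩ + 1) := by
    simp [xyIdx, dif_pos hk, flipAt_apply_self]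
  have hflipn : ∀ n ∈ Finset.univ.erase k,
      pauli (xyIdx s (flipAt ⟨k, hk⟩ h) n) (v n) (w n) = A n := by
    intro n hn
    have hnk := (Finset.mem_erase.mp hn).1
    have hz : zIdx k n = 0 := by simp [zIdx, hnk]
    have hxy : xyIdx s (flipAt ⟨k, hk⟩ h) n = xyIdx s h n := by
      by_cases hns : n ∈ s
      · simp only [xyIdx, dif_pos hns]
        congr 1
        exact flipAt_apply_ne _ _ _ (by simp [Subtype.ext_iff, hnk])
      · simp [xyIdx, hns]
    simp only [hA, hz, hxy, p0, one_mul]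
  rw [← Finset.mul_prod_erase Finset.univ
      (fun n => pauli (xyIdx s (flipAt ⟨k, hk⟩ h) n) (v n) (w n)) (Finset.mem_univ k),
    Finset.prod_congr rfl hflipn, hflipk, hAk, hBk]
  linear_combination (∏ n ∈ Finset.univ.erase k, A n) * hcomm

/-- Full commutator identity: `i[O, σ_h^s] = ∑_{k∈s} 2 ε(h k) o_k σ_{flip_k h}^s`. -/
lemma comm_zObservable (N : ℕ) (o : Fin N → ℝ) (s : Finset (Fin N))
    (h : {q // q ∈ s} → Fin 2) :
    Complex.I • (zObservable N o * subsetPauliXY N s h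
        - subsetPauliXY N s h * zObservable N o)
      = ∑ k : {q // q ∈ s},
          ((2 * epsSign (h k) * o k.1 : ℝ) : ℂ) • subsetPauliXY N s (flipAt k h) := by
  have expand : zObservable N o * subsetPauliXY N s h - subsetPauliXY N s h * zObservable N o
      = ∑ k : Fin N, (o k : ℂ) • (pauliString N (zIdx k) * subsetPauliXY N s h
          - subsetPauliXY N s h * pauliString N (zIdx k)) := by
    rw [zObservable, Finset.sum_mul, Finset.mul_sum, ← Finset.sum_sub_distrib]
    exact Finset.sum_congr rfl fun k _ => by
      rw [smul_mul_assoc, mul_smul_comm, ← smul_sub]; rfl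
  rw [expand, Finset.smul_sum]
  have term_eq : ∀ k : Fin N, Complex.I • ((o k : ℂ) • (pauliString N (zIdx k) * subsetPauliXY N s h
          - subsetPauliXY N s h * pauliString N (zIdx k)))
      = if hk : k ∈ s then ((2 * epsSign (h ⟨k, hk⟩) * o k : ℝ) : ℂ) •
          subsetPauliXY N s (flipAt ⟨k, hk⟩ h) else 0 := by
    intro k
    by_cases hk : k ∈ s
    · rw [dif_pos hk, smul_comm, zstr_comm_of_mem h hk, smul_smul]
      congr 1
      push_cast
      ring
    · rw [dif_neg hk, zstr_comm_of_not_mem h hk]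
      simp
  rw [Finset.sum_congr rfl fun k _ => term_eq k, Finset.sum_dite, Finset.sum_const_zero, add_zero]
  exact Fintype.sum_equiv (Equiv.subtypeEquivRight (fun x => by simp)) _ _ (fun x => rfl)

lemma trace_re_comm (N : ℕ) (o : Fin N → ℝ) (s : Finset (Fin N))
    (h : {q // q ∈ s} → Fin 2) (ρm : Matrix (Fin N → Fin 2) (Fin N → Fin 2) ℂ) :
    ((Complex.I • (zObservable N o * subsetPauliXY N s h
        - subsetPauliXY N s h * zObservable N o)) * ρm).trace.re
      = ∑ k : {q // q ∈ s},
          2 * epsSign (h k) * o k.1 * ((subsetPauliXY N s (flipAt k h) * ρm).trace.re) := by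
  rw [comm_zObservable, Finset.sum_mul]
  simp only [smul_mul_assoc, Matrix.trace_sum, Matrix.trace_smul, smul_eq_mul]
  rw [Complex.re_sum]
  exact Finset.sum_congr rfl fun k _ => by
    rw [Complex.re_ofReal_mul]
    try ring

lemma quad_helper {m : ℕ} {J : Type*} [Fintype J] (V : Fin m → J → ℝ) (x : Fin m → ℝ) :
    ∑ a : Fin m, ∑ b : Fin m, x a * x b * ∑ p : J, V a p * V b p
      = ∑ p : J, (∑ a, x a * V a p) ^ 2 := by
  have e1 : ∀ a b : Fin m, x a * x b * ∑ p : J, V a p * V b p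
      = ∑ p : J, (x a * V a p) * (x b * V b p) := by
    intro a b; rw [Finset.mul_sum]; exact Finset.sum_congr rfl fun p _ => by ring
  simp only [e1]
  rw [Finset.sum_congr rfl fun a _ => Finset.sum_comm, Finset.sum_comm]
  exact Finset.sum_congr rfl fun p _ => by rw [sq, Finset.sum_mul_sum]

noncomputable def deltaMin (N : ℕ) (o : Fin N → ℝ) (j : ℕ) : ℝ :=
  sInf {t : ℝ | ∃ g : Fin N → ℝ, (∀ i, g i = 0 ∨ g i = 1 ∨ g i = -1) ∧
    1 ≤ ∑ i, |g i| ∧ ∑ i, |g i| ≤ (j : ℝ) ∧ t = (∑ i, g i * o i) ^ 2}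

lemma deltaMin_le (N S : ℕ) (o : Fin N → ℝ) (s : Finset (Fin N)) (hcard : s.card = S)
    (hS : 1 ≤ S) (g : {q // q ∈ s} → Fin 2) :
    deltaMin N o S ≤ (∑ k : {q // q ∈ s}, epsSign (g k) * o k.1) ^ 2 := by
  classical
  set g' : Fin N → ℝ := fun i => if hi : i ∈ s then epsSign (g ⟨i, hi⟩) else 0 with hg'
  have habs : ∀ i, |g' i| = if i ∈ s then 1 else 0 := by
    intro i
    by_cases hi : i ∈ s
    · simp only [hg', dif_pos hi, if_pos hi]
      have hv : g ⟨i, hi⟩ = 0 ∨ g ⟨i, hi⟩ = 1 := by omega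
      rcases hv with hv | hv <;> simp [hv, epsSign]
    · simp [hg', hi]
  have hsum_abs : ∑ i, |g' i| = (S : ℝ) := by
    simp only [habs]
    rw [Finset.sum_ite_mem, Finset.univ_inter, Finset.sum_const, hcard]
    simp
  have hval : ∀ i, g' i = 0 ∨ g' i = 1 ∨ g' i = -1 := by
    intro i
    by_cases hi : i ∈ s
    · have hv : g ⟨i, hi⟩ = 0 ∨ g ⟨i, hi⟩ = 1 := by omega
      rcases hv with hv | hv <;> simp [hg', dif_pos hi, hv, epsSign]
    · simp [hg', hi]
  have hdot : ∑ i, g' i * o i = ∑ k : {q // q ∈ s}, epsSign (g k) * o k.1 := by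
    have hz : ∀ i ∈ Finset.univ, i ∉ s → g' i * o i = 0 := by
      intro i _ hi; simp [hg', hi]
    rw [← Finset.sum_subset s.subset_univ hz,
      ← Finset.sum_coe_sort s (fun i => g' i * o i)]
    refine Finset.sum_congr rfl fun k _ => ?_
    have hk : g' k.1 = epsSign (g k) := by rw [hg']; simp only [dif_pos k.2]
    rw [hk]
  have hbdd : BddBelow {t : ℝ | ∃ g : Fin N → ℝ, (∀ i, g i = 0 ∨ g i = 1 ∨ g i = -1) ∧
      1 ≤ ∑ i, |g i| ∧ ∑ i, |g i| ≤ (S : ℝ) ∧ t = (∑ i, g i * o i) ^ 2} := by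
    refine ⟨0, fun t ht => ?_⟩
    obtain ⟨g'', _, _, _, rfl⟩ := ht
    positivity
  refine csInf_le hbdd ?_
  exact ⟨g', hval, by rw [hsum_abs]; exact_mod_cast hS, le_of_eq hsum_abs, by rw [hdot]⟩

lemma sq_sum_le_abs (N : ℕ) (o : Fin N → ℝ) (s : Finset (Fin N))
    (g : {q // q ∈ s} → Fin 2) :
    (∑ k : {q // q ∈ s}, epsSign (g k) * o k.1) ^ 2 ≤ (∑ i, |o i|) ^ 2 := by
  have h1 : |∑ k : {q // q ∈ s}, epsSign (g k) * o k.1| ≤ ∑ k : {q // q ∈ s}, |o k.1| := by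
    refine (Finset.abs_sum_le_sum_abs _ _).trans (le_of_eq ?_)
    refine Finset.sum_congr rfl fun k _ => ?_
    rw [abs_mul]
    have : |epsSign (g k)| = 1 := by
      have hv : g k = 0 ∨ g k = 1 := by omega
      rcases hv with hv | hv <;> simp [hv, epsSign]
    rw [this, one_mul]
  have h2 : ∑ k : {q // q ∈ s}, |o k.1| = ∑ i ∈ s, |o i| :=
    Finset.sum_coe_sort s (fun i => |o i|)
  have h3 : ∑ i ∈ s, |o i| ≤ ∑ i, |o i| :=
    Finset.sum_le_sum_of_subset_of_nonneg s.subset_univ (fun i _ _ => abs_nonneg _)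
  calc (∑ k : {q // q ∈ s}, epsSign (g k) * o k.1) ^ 2
      = |∑ k : {q // q ∈ s}, epsSign (g k) * o k.1| ^ 2 := (_root_.sq_abs _).symm
    _ ≤ (∑ i, |o i|) ^ 2 := by
        refine pow_le_pow_left₀ (abs_nonneg _) ?_ 2
        rw [h2] at h1
        exact h1.trans h3

lemma sum_sum_mul_left {m : ℕ} (c : ℝ) (F : Fin m → Fin m → ℝ) :
    ∑ a, ∑ b, c * F a b = c * ∑ a, ∑ b, F a b := by
  simp [Finset.mul_sum]

lemma quad_helper2 {m : ℕ} {α : Type*} (Q : Finset α) {J : α → Type*} [∀ s, Fintype (J s)]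
    (V : Fin m → (s : α) → J s → ℝ) (x : Fin m → ℝ) :
    ∑ a : Fin m, ∑ b : Fin m, x a * x b * ∑ s ∈ Q, ∑ p : J s, V a s p * V b s p
      = ∑ s ∈ Q, ∑ p : J s, (∑ a, x a * V a s p) ^ 2 := by
  have e1 : ∀ a b : Fin m, x a * x b * ∑ s ∈ Q, ∑ p : J s, V a s p * V b s p
      = ∑ s ∈ Q, x a * x b * ∑ p : J s, V a s p * V b s p := fun a b => Finset.mul_sum _ _ _
  simp only [e1]
  rw [Finset.sum_congr rfl fun a _ => Finset.sum_comm, Finset.sum_comm]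
  exact Finset.sum_congr rfl fun s _ => quad_helper (fun a p => V a s p) x

noncomputable def asympQNTKxy (N S m : ℕ) (o : Fin N → ℝ) (Q : Finset (Finset (Fin N)))
    (ρ : Fin m → Matrix (Fin N → Fin 2) (Fin N → Fin 2) ℂ) : Matrix (Fin m) (Fin m) ℝ :=
  Matrix.of fun a a' => (1 / ((2 : ℝ) ^ S * Q.card)) *
    ∑ s ∈ Q, ∑ h : {q // q ∈ s} → Fin 2, (1 / 4 : ℝ) *
      (((Complex.I • (zObservable N o * subsetPauliXY N s h
            - subsetPauliXY N s h * zObservable N o)) * ρ a).trace.re *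
        ((Complex.I • (zObservable N o * subsetPauliXY N s h
            - subsetPauliXY N s h * zObservable N o)) * ρ a').trace.re)

noncomputable def pauliGramXY (N m : ℕ) (Q : Finset (Finset (Fin N)))
    (ρ : Fin m → Matrix (Fin N → Fin 2) (Fin N → Fin 2) ℂ) : Matrix (Fin m) (Fin m) ℝ :=
  Matrix.of fun a a' => ∑ s ∈ Q, ∑ p : {q // q ∈ s} → Fin 2,
    (subsetPauliXY N s p * ρ a).trace.re * (subsetPauliXY N s p * ρ a').trace.re

theorem asympQNTKxy_loewner_bounds (N S m : ℕ) (hS : 1 ≤ S) (hSN : S ≤ N)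
    (o : Fin N → ℝ) (Q : Finset (Finset (Fin N))) (hQ : Q.Nonempty)
    (hQcard : ∀ s ∈ Q, s.card = S)
    (ρ : Fin m → Matrix (Fin N → Fin 2) (Fin N → Fin 2) ℂ)
    (hherm : ∀ a, (ρ a).IsHermitian) (htr : ∀ a, (ρ a).trace = 1) :
    ((((∑ k, |o k|) ^ 2 / ((2 : ℝ) ^ S * Q.card)) • pauliGramXY N m Q ρ
        - asympQNTKxy N S m o Q ρ).PosSemidef)
    ∧ ((asympQNTKxy N S m o Q ρ
        - (deltaMin N o S / ((2 : ℝ) ^ S * Q.card)) • pauliGramXY N m Q ρ).PosSemidef) := by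
  classical
  have hDpos : (0:ℝ) < (2 : ℝ) ^ S * Q.card := by
    have hc : (0:ℝ) < Q.card := by exact_mod_cast Finset.card_pos.mpr hQ
    positivity
  have hDinv : (0:ℝ) ≤ 1 / ((2 : ℝ) ^ S * Q.card) := by positivity
  -- Hermitian-ness
  have hGH : (pauliGramXY N m Q ρ).IsHermitian := by
    show _ᴴ = _
    ext a b
    simp only [Matrix.conjTranspose_apply, pauliGramXY, Matrix.of_apply, star_trivial]
    exact Finset.sum_congr rfl fun s _ => Finset.sum_congr rfl fun p _ => mul_comm _ _
  have hKH : (asympQNTKxy N S m o Q ρ).IsHermitian := by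
    show _ᴴ = _
    ext a b
    simp only [Matrix.conjTranspose_apply, asympQNTKxy, Matrix.of_apply, star_trivial]
    congr 1
    exact Finset.sum_congr rfl fun s _ => Finset.sum_congr rfl fun h _ => by ring
  -- the main quadratic-form inequalities
  have main : ∀ x : Fin m → ℝ,
      deltaMin N o S / ((2 : ℝ) ^ S * Q.card) * (star x ⬝ᵥ (pauliGramXY N m Q ρ *ᵥ x))
          ≤ star x ⬝ᵥ (asympQNTKxy N S m o Q ρ *ᵥ x)
      ∧ star x ⬝ᵥ (asympQNTKxy N S m o Q ρ *ᵥ x)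
          ≤ (∑ k, |o k|) ^ 2 / ((2 : ℝ) ^ S * Q.card)
              * (star x ⬝ᵥ (pauliGramXY N m Q ρ *ᵥ x)) := by
    intro x
    have dot_expand : ∀ M : Matrix (Fin m) (Fin m) ℝ,
        star x ⬝ᵥ (M *ᵥ x) = ∑ a, ∑ b, x a * x b * M a b := by
      intro M
      simp only [dotProduct, Matrix.mulVec, Pi.star_apply, star_trivial,
        Finset.mul_sum]
      exact Finset.sum_congr rfl fun a _ => Finset.sum_congr rfl fun b _ => by ring
    -- Gram quadratic form
    have hGq : star x ⬝ᵥ (pauliGramXY N m Q ρ *ᵥ x)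
        = ∑ s ∈ Q, ∑ p : {q // q ∈ s} → Fin 2,
            (∑ a, x a * ((subsetPauliXY N s p * ρ a).trace.re)) ^ 2 := by
      rw [dot_expand]
      simp only [pauliGramXY, Matrix.of_apply]
      exact quad_helper2 Q (fun a s p => ((subsetPauliXY N s p * ρ a).trace.re)) x
    -- QNTK quadratic form
    have hKq : star x ⬝ᵥ (asympQNTKxy N S m o Q ρ *ᵥ x)
        = (1 / ((2 : ℝ) ^ S * Q.card)) * ∑ s ∈ Q, ∑ h : {q // q ∈ s} → Fin 2,
            (∑ k : {q // q ∈ s}, epsSign (h k) * o k.1 *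
              (∑ a, x a * ((subsetPauliXY N s (flipAt k h) * ρ a).trace.re))) ^ 2 := by
      rw [dot_expand]
      simp only [asympQNTKxy, Matrix.of_apply]
      have e1 : ∀ a b : Fin m, x a * x b * ((1 / ((2 : ℝ) ^ S * Q.card)) *
          ∑ s ∈ Q, ∑ h : {q // q ∈ s} → Fin 2, (1 / 4 : ℝ) *
            (((Complex.I • (zObservable N o * subsetPauliXY N s h
                  - subsetPauliXY N s h * zObservable N o)) * ρ a).trace.re *
              ((Complex.I • (zObservable N o * subsetPauliXY N s h
                  - subsetPauliXY N s h * zObservable N o)) * ρ b).trace.re))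
          = (1 / ((2 : ℝ) ^ S * Q.card)) * (x a * x b *
              ∑ s ∈ Q, ∑ h : {q // q ∈ s} → Fin 2,
                ((1/2) * ((Complex.I • (zObservable N o * subsetPauliXY N s h
                      - subsetPauliXY N s h * zObservable N o)) * ρ a).trace.re) *
                ((1/2) * ((Complex.I • (zObservable N o * subsetPauliXY N s h
                      - subsetPauliXY N s h * zObservable N o)) * ρ b).trace.re)) := by
        intro a b
        have : ∀ s ∈ Q, ∑ h : {q // q ∈ s} → Fin 2, (1 / 4 : ℝ) *
            (((Complex.I • (zObservable N o * subsetPauliXY N s h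
                  - subsetPauliXY N s h * zObservable N o)) * ρ a).trace.re *
              ((Complex.I • (zObservable N o * subsetPauliXY N s h
                  - subsetPauliXY N s h * zObservable N o)) * ρ b).trace.re)
            = ∑ h : {q // q ∈ s} → Fin 2,
                ((1/2) * ((Complex.I • (zObservable N o * subsetPauliXY N s h
                      - subsetPauliXY N s h * zObservable N o)) * ρ a).trace.re) *
                ((1/2) * ((Complex.I • (zObservable N o * subsetPauliXY N s h
                      - subsetPauliXY N s h * zObservable N o)) * ρ b).trace.re) := by
          intro s _
          exact Finset.sum_congr rfl fun h _ => by ring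
        rw [Finset.sum_congr rfl this]
        ring
      simp only [e1]
      rw [sum_sum_mul_left]
      congr 1
      rw [quad_helper2 Q (fun a s h => (1/2 : ℝ) *
        ((Complex.I • (zObservable N o * subsetPauliXY N s h
            - subsetPauliXY N s h * zObservable N o)) * ρ a).trace.re) x]
      refine Finset.sum_congr rfl fun s _ => Finset.sum_congr rfl fun hh _ => ?_
      congr 1
      have expand : ∀ a : Fin m, x a * ((1/2 : ℝ) *
          ((Complex.I • (zObservable N o * subsetPauliXY N s hh
              - subsetPauliXY N s hh * zObservable N o)) * ρ a).trace.re)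
          = ∑ k : {q // q ∈ s}, epsSign (hh k) * o k.1 *
              (x a * ((subsetPauliXY N s (flipAt k hh) * ρ a).trace.re)) := by
        intro a
        rw [trace_re_comm N o s hh (ρ a), Finset.mul_sum, Finset.mul_sum]
        exact Finset.sum_congr rfl fun k _ => by ring
      simp only [expand]
      rw [Finset.sum_comm]
      exact Finset.sum_congr rfl fun k _ => (Finset.mul_sum _ _ _).symm
    -- per-`s` core bounds
    have hcore : ∀ s ∈ Q,
        deltaMin N o S * ∑ p : {q // q ∈ s} → Fin 2,
            (∑ a, x a * ((subsetPauliXY N s p * ρ a).trace.re)) ^ 2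
          ≤ (∑ h : {q // q ∈ s} → Fin 2,
              (∑ k : {q // q ∈ s}, epsSign (h k) * o k.1 *
                (∑ a, x a * ((subsetPauliXY N s (flipAt k h) * ρ a).trace.re))) ^ 2)
        ∧ (∑ h : {q // q ∈ s} → Fin 2,
              (∑ k : {q // q ∈ s}, epsSign (h k) * o k.1 *
                (∑ a, x a * ((subsetPauliXY N s (flipAt k h) * ρ a).trace.re))) ^ 2)
          ≤ (∑ i, |o i|) ^ 2 * ∑ p : {q // q ∈ s} → Fin 2,
              (∑ a, x a * ((subsetPauliXY N s p * ρ a).trace.re)) ^ 2 := by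
      intro s hs
      exact core_bounds (fun k => o k.1)
        (fun p => ∑ a, x a * ((subsetPauliXY N s p * ρ a).trace.re))
        (deltaMin N o S) ((∑ i, |o i|) ^ 2)
        (fun g => deltaMin_le N S o s (hQcard s hs) hS g)
        (fun g => sq_sum_le_abs N o s g)
    have hlow : deltaMin N o S * (∑ s ∈ Q, ∑ p : {q // q ∈ s} → Fin 2,
          (∑ a, x a * ((subsetPauliXY N s p * ρ a).trace.re)) ^ 2)
        ≤ ∑ s ∈ Q, ∑ h : {q // q ∈ s} → Fin 2,
            (∑ k : {q // q ∈ s}, epsSign (h k) * o k.1 *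
              (∑ a, x a * ((subsetPauliXY N s (flipAt k h) * ρ a).trace.re))) ^ 2 := by
      rw [Finset.mul_sum]
      exact Finset.sum_le_sum fun s hs => (hcore s hs).1
    have hupp : (∑ s ∈ Q, ∑ h : {q // q ∈ s} → Fin 2,
            (∑ k : {q // q ∈ s}, epsSign (h k) * o k.1 *
              (∑ a, x a * ((subsetPauliXY N s (flipAt k h) * ρ a).trace.re))) ^ 2)
        ≤ (∑ i, |o i|) ^ 2 * (∑ s ∈ Q, ∑ p : {q // q ∈ s} → Fin 2,
            (∑ a, x a * ((subsetPauliXY N s p * ρ a).trace.re)) ^ 2) := by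
      rw [Finset.mul_sum]
      exact Finset.sum_le_sum fun s hs => (hcore s hs).2
    constructor
    · rw [hKq, hGq]
      calc deltaMin N o S / ((2 : ℝ) ^ S * Q.card) * (∑ s ∈ Q, ∑ p : {q // q ∈ s} → Fin 2,
              (∑ a, x a * ((subsetPauliXY N s p * ρ a).trace.re)) ^ 2)
          = (1 / ((2 : ℝ) ^ S * Q.card)) * (deltaMin N o S *
              ∑ s ∈ Q, ∑ p : {q // q ∈ s} → Fin 2,
                (∑ a, x a * ((subsetPauliXY N s p * ρ a).trace.re)) ^ 2) := by ring
        _ ≤ _ := mul_le_mul_of_nonneg_left hlow hDinv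
    · rw [hKq, hGq]
      calc (1 / ((2 : ℝ) ^ S * Q.card)) * ∑ s ∈ Q, ∑ h : {q // q ∈ s} → Fin 2,
              (∑ k : {q // q ∈ s}, epsSign (h k) * o k.1 *
                (∑ a, x a * ((subsetPauliXY N s (flipAt k h) * ρ a).trace.re))) ^ 2
          ≤ (1 / ((2 : ℝ) ^ S * Q.card)) * ((∑ i, |o i|) ^ 2 *
              ∑ s ∈ Q, ∑ p : {q // q ∈ s} → Fin 2,
                (∑ a, x a * ((subsetPauliXY N s p * ρ a).trace.re)) ^ 2) :=
            mul_le_mul_of_nonneg_left hupp hDinv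
        _ = (∑ k, |o k|) ^ 2 / ((2 : ℝ) ^ S * Q.card) * ∑ s ∈ Q,
              ∑ p : {q // q ∈ s} → Fin 2,
                (∑ a, x a * ((subsetPauliXY N s p * ρ a).trace.re)) ^ 2 := by ring
  -- package as PosSemidef
  constructor
  · refine Matrix.PosSemidef.of_dotProduct_mulVec_nonneg ?_ fun x => ?_
    · have h1 : (((∑ k, |o k|) ^ 2 / ((2 : ℝ) ^ S * Q.card)) • pauliGramXY N m Q ρ).IsHermitian := by
        show _ᴴ = _
        rw [Matrix.conjTranspose_smul, star_trivial, hGH]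
      exact h1.sub hKH
    · rw [Matrix.sub_mulVec, dotProduct_sub, Matrix.smul_mulVec, dotProduct_smul,
        smul_eq_mul]
      have := (main x).2
      linarith
  · refine Matrix.PosSemidef.of_dotProduct_mulVec_nonneg ?_ fun x => ?_
    · have h1 : ((deltaMin N o S / ((2 : ℝ) ^ S * Q.card)) • pauliGramXY N m Q ρ).IsHermitian := by
        show _ᴴ = _
        rw [Matrix.conjTranspose_smul, star_trivial, hGH]
      exact hKH.sub h1
    · rw [Matrix.sub_mulVec, dotProduct_sub, Matrix.smul_mulVec, dotProduct_smul,
        smul_eq_mul]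
      have := (main x).1
      linarith
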